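/- arXiv:1504.07891 — 5 statements merged into one kernel-verified Lean document; each statement's English description precedes it below -/
import Mathlib

section
/- Let δ³ = a₁³ − 27a₃ with δ ≠ 0 and let ζ₃ be a primitive cube root of unity. Then the point T' = (3a₃/(δ − a₁), a₃(ζ₃δ − a₁)/(δ − a₁)) is a 3-torsion point on the elliptic curve y² + a₁xy + a₃y = x³, provided δ ≠ a₁. -/
open WeierstrassCurve.Affine WeierstrassCurve.Affine.Point


open Classical in
/-- Let `δ³ = a₁³ - 27a₃` with `δ ≠ 0`, `δ ≠ a₁`, and let `ζ` be a primitive cube root of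
unity (`ζ² + ζ + 1 = 0`). Then `T' = (3a₃/(δ - a₁), a₃(ζδ - a₁)/(δ - a₁))` is a
3-torsion point on the elliptic curve `y² + a₁xy + a₃y = x³`. -/
theorem stmt6 {K : Type*} [Field K] [CharZero K] (a₁ a₃ δ ζ : K)
    (hΔ : a₃ * (a₁ ^ 3 - 27 * a₃) ≠ 0) (hδ : δ ^ 3 = a₁ ^ 3 - 27 * a₃) (hδ0 : δ ≠ 0)
    (hζ : ζ ^ 2 + ζ + 1 = 0) (hne : δ ≠ a₁) :
    ∃ h : WeierstrassCurve.Affine.Nonsingular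
        ({ a₁ := a₁, a₂ := 0, a₃ := a₃, a₄ := 0, a₆ := 0 } : WeierstrassCurve.Affine K)
        (3 * a₃ / (δ - a₁)) (a₃ * (ζ * δ - a₁) / (δ - a₁)),
      3 • WeierstrassCurve.Affine.Point.some _ _ h = 0 := by
  set W : WeierstrassCurve.Affine K := { a₁ := a₁, a₂ := 0, a₃ := a₃, a₄ := 0, a₆ := 0 } with hW
  have ht : δ - a₁ ≠ 0 := sub_ne_zero.mpr hne
  have ha₃ : a₃ ≠ 0 := fun h => hΔ (by rw [h]; ring)
  have h2ζ : 2 * ζ + 1 ≠ 0 := by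
    intro h
    exact three_ne_zero (α := K) (by linear_combination 4*hζ - (2*ζ+1)*h)
  set x := 3 * a₃ / (δ - a₁) with hxd
  set y := a₃ * (ζ * δ - a₁) / (δ - a₁) with hyd
  have heq : W.Equation x y := by
    rw [WeierstrassCurve.Affine.equation_iff]
    rw [hxd, hyd, hW]
    field_simp
    linear_combination a₃^2*δ^2*(δ-a₁)*hζ - a₃^2*hδ
  have hΔW : W.Δ ≠ 0 := by
    have : W.Δ = a₃ ^ 3 * (a₁ ^ 3 - 27 * a₃) := by
      simp [WeierstrassCurve.Δ, WeierstrassCurve.b₂, WeierstrassCurve.b₄,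
        WeierstrassCurve.b₆, WeierstrassCurve.b₈, hW]
      ring
    rw [this]
    exact fun h => hΔ (by rcases mul_eq_zero.mp h with h | h
                          · exact mul_eq_zero_of_left (pow_eq_zero_iff (n := 3) (by norm_num) |>.mp h) _
                          · exact mul_eq_zero_of_right _ h)
  have hns : W.Nonsingular x y := (W.equation_iff_nonsingular_of_Δ_ne_zero hΔW).mp heq
  have hyne : y ≠ W.negY x y := by
    intro h
    rw [WeierstrassCurve.Affine.negY, hxd, hyd] at h
    simp only [hW] at h
    field_simp at h
    have key : a₃ * δ * (2*ζ+1) * ((δ - a₁)*(δ - a₁)) = 0 := by linear_combination a₃ * (δ - a₁)^2 * h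
    exact mul_ne_zero (mul_ne_zero (mul_ne_zero ha₃ hδ0) h2ζ) (mul_ne_zero ht ht) key
  have hden : y - W.negY x y ≠ 0 := sub_ne_zero.mpr hyne
  have hd2 : (δ - a₁) * (2*ζ+1) ≠ 0 := mul_ne_zero ht h2ζ
  have hL : W.slope x x y y = -(δ^2 + a₁*ζ*δ + a₁^2*ζ^2) / ((δ - a₁)*(2*ζ+1)) := by
    rw [slope_of_Y_ne rfl hyne, div_eq_div_iff hden hd2]
    rw [WeierstrassCurve.Affine.negY, hxd, hyd]
    simp only [hW]
    field_simp
    linear_combination (2*ζ+1)*a₃*hδ + (2*ζ+1)*a₃*a₁^2*δ*hζ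
  have hx' : W.addX x x (W.slope x x y y) = x := by
    rw [hL, hxd]
    show (-(δ^2 + a₁*ζ*δ + a₁^2*ζ^2) / ((δ - a₁)*(2*ζ+1)))^2
        + a₁ * (-(δ^2 + a₁*ζ*δ + a₁^2*ζ^2) / ((δ - a₁)*(2*ζ+1)))
        - 0 - 3*a₃/(δ-a₁) - 3*a₃/(δ-a₁) = 3*a₃/(δ-a₁)
    rw [sub_zero, div_pow, mul_div_assoc']
    rw [div_add_div _ _ (pow_ne_zero 2 hd2) hd2]
    rw [div_sub_div _ _ (mul_ne_zero (pow_ne_zero 2 hd2) hd2) ht]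
    rw [div_sub_div _ _ (mul_ne_zero (mul_ne_zero (pow_ne_zero 2 hd2) hd2) ht) ht]
    rw [div_eq_div_iff (mul_ne_zero (mul_ne_zero (mul_ne_zero (pow_ne_zero 2 hd2) hd2) ht) ht) ht]
    linear_combination (δ^5 + 2*δ^5*ζ + (-36)*a₃*δ^2 + (-108)*a₃*δ^2*ζ + (-108)*a₃*δ^2*ζ^2 + (-72)*a₃*δ^2*ζ^3 + (-5)*a₁*δ^4 + (-10)*a₁*δ^4*ζ + 180*a₁*a₃*δ + 540*a₁*a₃*δ*ζ + 540*a₁*a₃*δ*ζ^2 + 360*a₁*a₃*δ*ζ^3 + 11*a₁^2*δ^3 + 23*a₁^2*δ^3*ζ + 3*a₁^2*δ^3*ζ^2 + 2*a₁^2*δ^3*ζ^3 + (-387)*a₁^2*a₃ + (-1161)*a₁^2*a₃*ζ + (-1161)*a₁^2*a₃*ζ^2 + (-774)*a₁^2*a₃*ζ^3 + (-13)*a₁^3*δ^2 + (-29)*a₁^3*δ^2*ζ + (-9)*a₁^3*δ^2*ζ^2 + (-6)*a₁^3*δ^2*ζ^3 + 6*a₁^4*δ + 14*a₁^4*δ*ζ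 + 7*a₁^4*δ*ζ^2 + 8*a₁^4*δ*ζ^3 + 5*a₁^4*δ*ζ^4 + 2*a₁^4*δ*ζ^5 + 6*a₁^5 + 15*a₁^5*ζ + 5*a₁^5*ζ^2 + (-10)*a₁^5*ζ^3 + (-20)*a₁^5*ζ^4 + (-8)*a₁^5*ζ^5) * hδ + (972*a₃^2*δ^2 + 1944*a₃^2*δ^2*ζ + (-4860)*a₁*a₃^2*δ + (-9720)*a₁*a₃^2*δ*ζ + 10449*a₁^2*a₃^2 + 20898*a₁^2*a₃^2*ζ + 405*a₁^3*a₃*δ^2 + 810*a₁^3*a₃*δ^2*ζ + (-27)*a₁^4*a₃*δ + (-81)*a₁^4*a₃*δ*ζ + (-81)*a₁^4*a₃*δ*ζ^2 + (-54)*a₁^4*a₃*δ*ζ^3 + (-540)*a₁^5*a₃ + (-972)*a₁^5*a₃*ζ + 324*a₁^5*a₃*ζ^2 + 216*a₁^5*a₃*ζ^3 + (-12)*a₁^6*δ^2 + (-18)*a₁^6*δ^2*ζ + 18*a₁^6*δ^2*ζ^2 + 12*a₁^6*δ^2*ζ^3 + 6*a₁^7*δ + 9*a₁^7*δ*ζ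 + (-9)*a₁^7*δ*ζ^2 + (-6)*a₁^7*δ*ζ^3 + 6*a₁^8 + 9*a₁^8*ζ + (-9)*a₁^8*ζ^2 + (-6)*a₁^8*ζ^3) * hζ
  have hy' : W.addY x x y (W.slope x x y y) = W.negY x y := by
    rw [WeierstrassCurve.Affine.addY, WeierstrassCurve.Affine.negAddY, hx', sub_self,
      mul_zero, zero_add]
  refine ⟨hns, ?_⟩
  have h3 : (3 : ℕ) • WeierstrassCurve.Affine.Point.some _ _ hns =
      (WeierstrassCurve.Affine.Point.some _ _ hns + WeierstrassCurve.Affine.Point.some _ _ hns) +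
        WeierstrassCurve.Affine.Point.some _ _ hns := by
    rw [show (3:ℕ)=2+1 from rfl, add_nsmul, two_nsmul, one_nsmul]
  rw [h3, add_self_of_Y_ne hyne]
  exact add_of_Y_eq hx' hy'
end

section
/- The system of equations a²b + b²c + c²a)d = 0, bc³ − ba³ − cd³ = 0, ab³ − ac³ − bd³ = 0, ca³ − cb³ − ad³ = 0 in P³ defines the union of the curve {a²b + b²c + c²a = 0, ab² + bc² + ca² = d³} and the four points (0:0:0:1), (1:1:1:0), (1:ζ₃:ζ₃²:0), (1:ζ₃²:ζ₃:0). -/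
/-- The system `(a²b + b²c + c²a)d = 0`, `bc³ - ba³ - cd³ = 0`, `ab³ - ac³ - bd³ = 0`,
`ca³ - cb³ - ad³ = 0` in `ℙ³` defines the union of the curve
`{a²b + b²c + c²a = 0, ab² + bc² + ca² = d³}` and the four points `(0:0:0:1)`,
`(1:1:1:0)`, `(1:ζ₃:ζ₃²:0)`, `(1:ζ₃²:ζ₃:0)`. -/
theorem stmt7 {K : Type*} [Field K] [IsAlgClosed K] [CharZero K] (ζ : K)
    (hζ : IsPrimitiveRoot ζ 3) (a b c d : K) (hne : ¬(a = 0 ∧ b = 0 ∧ c = 0 ∧ d = 0)) :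
    ((a ^ 2 * b + b ^ 2 * c + c ^ 2 * a) * d = 0 ∧
     b * c ^ 3 - b * a ^ 3 - c * d ^ 3 = 0 ∧
     a * b ^ 3 - a * c ^ 3 - b * d ^ 3 = 0 ∧
     c * a ^ 3 - c * b ^ 3 - a * d ^ 3 = 0) ↔
    ((a ^ 2 * b + b ^ 2 * c + c ^ 2 * a = 0 ∧
      a * b ^ 2 + b * c ^ 2 + c * a ^ 2 = d ^ 3) ∨
     ∃ lam : K, lam ≠ 0 ∧
       ((a, b, c, d) = (0, 0, 0, lam) ∨
        (a, b, c, d) = (lam, lam, lam, 0) ∨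
        (a, b, c, d) = (lam, lam * ζ, lam * ζ ^ 2, 0) ∨
        (a, b, c, d) = (lam, lam * ζ ^ 2, lam * ζ, 0))) := by
  have h3 : ζ ^ 3 = 1 := hζ.pow_eq_one
  have hne1 : ζ ≠ 1 := hζ.ne_one (by norm_num)
  have hsum : ζ ^ 2 + ζ + 1 = 0 := by
    have hfac : (ζ - 1) * (ζ ^ 2 + ζ + 1) = 0 := by linear_combination h3
    rcases mul_eq_zero.mp hfac with h | h
    · exact absurd (by linear_combination h) hne1
    · exact h
  have cube : ∀ x y : K, x ^ 3 = y ^ 3 → x = y ∨ x = ζ * y ∨ x = ζ ^ 2 * y := by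
    intro x y h
    have key : (x - y) * ((x - ζ * y) * (x - ζ ^ 2 * y)) = 0 := by
      linear_combination h + (y ^ 3 - y ^ 3 * ζ + x * y ^ 2 * ζ - x ^ 2 * y) * hsum
    rcases mul_eq_zero.mp key with h | h
    · exact Or.inl (by linear_combination h)
    rcases mul_eq_zero.mp h with h | h
    · exact Or.inr (Or.inl (by linear_combination h))
    · exact Or.inr (Or.inr (by linear_combination h))
  constructor
  · rintro ⟨h1, h2, h3', h4⟩
    by_cases hd : d = 0
    · subst hd
      by_cases ha : a = 0
      · subst ha
        left
        have hbc : b * c ^ 3 = 0 := by linear_combination h2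
        rcases mul_eq_zero.mp hbc with hb | hc
        · subst hb; constructor <;> ring
        · have hc0 : c = 0 := pow_eq_zero_iff (by norm_num) |>.mp hc
          subst hc0; constructor <;> ring
      · by_cases hb : b = 0
        · subst hb
          have hac : a * c ^ 3 = 0 := by linear_combination -h3'
          rcases mul_eq_zero.mp hac with h | hc
          · exact absurd h ha
          · have hc0 : c = 0 := pow_eq_zero_iff (by norm_num) |>.mp hc
            subst hc0; left; constructor <;> ring
        · have hb3 : b ^ 3 = c ^ 3 := by
            rcases mul_eq_zero.mp (show a * (b ^ 3 - c ^ 3) = 0 by linear_combination h3')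
              with h | h
            · exact absurd h ha
            · linear_combination h
          have hc3 : c ^ 3 = a ^ 3 := by
            rcases mul_eq_zero.mp (show b * (c ^ 3 - a ^ 3) = 0 by linear_combination h2)
              with h | h
            · exact absurd h hb
            · linear_combination h
          have hba : b ^ 3 = a ^ 3 := hb3.trans hc3
          rcases cube b a hba with hB | hB | hB <;> rcases cube c a hc3 with hC | hC | hC
          · -- b = a, c = a : point (a,a,a,0)
            refine Or.inr ⟨a, ha, Or.inr (Or.inl ?_)⟩
            rw [hB, hC]
          · left
            rw [hB, hC]
            constructor
            · linear_combination a ^ 3 * hsum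
            · linear_combination a ^ 3 * hsum
          · left
            rw [hB, hC]
            constructor
            · linear_combination (a ^ 3 - a ^ 3 * ζ + a ^ 3 * ζ ^ 2) * hsum
            · linear_combination (a ^ 3 - a ^ 3 * ζ + a ^ 3 * ζ ^ 2) * hsum
          · left
            rw [hB, hC]
            constructor
            · linear_combination a ^ 3 * hsum
            · linear_combination a ^ 3 * hsum
          · left
            rw [hB, hC]
            constructor
            · linear_combination a ^ 3 * ζ * hsum
            · linear_combination a ^ 3 * ζ * hsum
          · -- b = ζ a, c = ζ² a
            refine Or.inr ⟨a, ha, Or.inr (Or.inr (Or.inl ?_))⟩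
            rw [hB, hC, mul_comm ζ a, mul_comm (ζ ^ 2) a]
          · left
            rw [hB, hC]
            constructor
            · linear_combination (a ^ 3 - a ^ 3 * ζ + a ^ 3 * ζ ^ 2) * hsum
            · linear_combination (a ^ 3 - a ^ 3 * ζ + a ^ 3 * ζ ^ 2) * hsum
          · -- b = ζ² a, c = ζ a
            refine Or.inr ⟨a, ha, Or.inr (Or.inr (Or.inr ?_))⟩
            rw [hB, hC, mul_comm ζ a, mul_comm (ζ ^ 2) a]
          · left
            rw [hB, hC]
            constructor
            · linear_combination (a ^ 3 * ζ ^ 2 - a ^ 3 * ζ ^ 3 + a ^ 3 * ζ ^ 4) * hsum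
            · linear_combination (a ^ 3 * ζ ^ 2 - a ^ 3 * ζ ^ 3 + a ^ 3 * ζ ^ 4) * hsum
    · -- d ≠ 0
      have hP : a ^ 2 * b + b ^ 2 * c + c ^ 2 * a = 0 := by
        rcases mul_eq_zero.mp h1 with h | h
        · exact h
        · exact absurd h hd
      by_cases hQ : a * b ^ 2 + b * c ^ 2 + c * a ^ 2 = d ^ 3
      · exact Or.inl ⟨hP, hQ⟩
      · -- must show a = b = c = 0
        have habc : a = 0 ∧ b = 0 ∧ c = 0 := by
          by_cases hs : a + b + c = 0
          · have hc : c = -a - b := by linear_combination hs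
            subst hc
            have hA : a * (a * b ^ 2 + b * (-a - b) ^ 2 + (-a - b) * a ^ 2 - d ^ 3) = 0 := by
              linear_combination h4 + b * hP
            have hB : b * (a * b ^ 2 + b * (-a - b) ^ 2 + (-a - b) * a ^ 2 - d ^ 3) = 0 := by
              linear_combination h3' + (-a - b) * hP
            have hQ' : ¬(a * b ^ 2 + b * (-a - b) ^ 2 + (-a - b) * a ^ 2 - d ^ 3 = 0) := by
              intro h; exact hQ (by linear_combination h)
            have ha0 : a = 0 := by
              rcases mul_eq_zero.mp hA with h | h
              · exact h
              · exact absurd h hQ'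
            have hb0 : b = 0 := by
              rcases mul_eq_zero.mp hB with h | h
              · exact h
              · exact absurd h hQ'
            exact ⟨ha0, hb0, by rw [ha0, hb0]; ring⟩
          · exfalso
            have key : (a + b + c) * (a * b ^ 2 + b * c ^ 2 + c * a ^ 2 - d ^ 3) = 0 := by
              linear_combination h2 + h3' + h4 + (a + b + c) * hP
            rcases mul_eq_zero.mp key with h | h
            · exact hs h
            · exact hQ (by linear_combination h)
        obtain ⟨ha0, hb0, hc0⟩ := habc
        exact Or.inr ⟨d, hd, Or.inl (by rw [ha0, hb0, hc0])⟩
  · rintro (⟨hP, hQ⟩ | ⟨lam, hlam, h | h | h | h⟩)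
    · exact ⟨by linear_combination d * hP, by linear_combination (-a) * hP + c * hQ,
        by linear_combination (-c) * hP + b * hQ, by linear_combination (-b) * hP + a * hQ⟩
    all_goals obtain ⟨ha, hb, hc, hd⟩ :
        a = _ ∧ b = _ ∧ c = _ ∧ d = _ := by simpa [Prod.ext_iff] using h
    all_goals rw [ha, hb, hc, hd]
    · exact ⟨by ring, by ring, by ring, by ring⟩
    · exact ⟨by ring, by ring, by ring, by ring⟩
    · refine ⟨by ring, ?_, ?_, ?_⟩
      · linear_combination (-(lam ^ 4 * ζ) + lam ^ 4 * ζ ^ 2 - lam ^ 4 * ζ ^ 4 +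
          lam ^ 4 * ζ ^ 5) * hsum
      · linear_combination (lam ^ 4 * ζ ^ 3 - lam ^ 4 * ζ ^ 4) * hsum
      · linear_combination (lam ^ 4 * ζ ^ 2 - lam ^ 4 * ζ ^ 3) * hsum
    · refine ⟨by ring, ?_, ?_, ?_⟩
      · linear_combination (-(lam ^ 4 * ζ ^ 2) + lam ^ 4 * ζ ^ 3) * hsum
      · linear_combination (-(lam ^ 4 * ζ ^ 3) + lam ^ 4 * ζ ^ 4) * hsum
      · linear_combination (lam ^ 4 * ζ - lam ^ 4 * ζ ^ 2 + lam ^ 4 * ζ ^ 4 -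
          lam ^ 4 * ζ ^ 5) * hsum
end

section
/- Let F₁ = a²b + b²c + c²a and F₂ = ab² + bc² + ca² − d³. Then the determinant of the Hessian matrix of tF₁ − F₂ (with respect to the variables a,b,c,d) equals −48(t³ − 1)(a³ + b³ + c³ − 3abc)d. -/
open MvPolynomial

theorem pderiv_two_aux {σ : Type*} [DecidableEq σ] (i : σ) :
    pderiv i (2 : MvPolynomial σ ℚ) = 0 := by
  have : (2 : MvPolynomial σ ℚ) = C 2 := by rw [map_ofNat]
  rw [this, pderiv_C]

theorem pderiv_three_aux {σ : Type*} [DecidableEq σ] (i : σ) :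
    pderiv i (3 : MvPolynomial σ ℚ) = 0 := by
  have : (3 : MvPolynomial σ ℚ) = C 3 := by rw [map_ofNat]
  rw [this, pderiv_C]

theorem pderiv_natCast_aux {σ : Type*} [DecidableEq σ] (i : σ) (n : ℕ) :
    pderiv i ((n : ℕ) : MvPolynomial σ ℚ) = 0 := by
  have : ((n : ℕ) : MvPolynomial σ ℚ) = C (n : ℚ) := by simp
  rw [this, pderiv_C]

theorem pderiv_one_aux {σ : Type*} [DecidableEq σ] (i : σ) :
    pderiv i (1 : MvPolynomial σ ℚ) = 0 :=
  Derivation.map_one_eq_zero _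

theorem det4_aux {R : Type*} [CommRing R] (x y z w : R) :
    (Matrix.of ![![x, y, z, 0], ![y, z, x, 0], ![z, x, y, 0],
      ![0, 0, 0, w]] : Matrix (Fin 4) (Fin 4) R).det
      = w * (3 * x * y * z - x ^ 3 - y ^ 3 - z ^ 3) := by
  simp [Matrix.det_succ_row_zero, Fin.sum_univ_succ, Fin.succAbove]
  ring

set_option maxHeartbeats 2000000 in
/-- With `F₁ = a²b + b²c + c²a` and `F₂ = ab² + bc² + ca² - d³`, the determinant of the
Hessian matrix of `tF₁ - F₂` with respect to `a,b,c,d` equals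
`-48(t³ - 1)(a³ + b³ + c³ - 3abc)d`. -/
theorem stmt8 :
    let t : MvPolynomial (Fin 5) ℚ := X 0
    let a : MvPolynomial (Fin 5) ℚ := X 1
    let b : MvPolynomial (Fin 5) ℚ := X 2
    let c : MvPolynomial (Fin 5) ℚ := X 3
    let d : MvPolynomial (Fin 5) ℚ := X 4
    let F : MvPolynomial (Fin 5) ℚ :=
      t * (a ^ 2 * b + b ^ 2 * c + c ^ 2 * a) -
        (a * b ^ 2 + b * c ^ 2 + c * a ^ 2 - d ^ 3)
    let H : Matrix (Fin 4) (Fin 4) (MvPolynomial (Fin 5) ℚ) :=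
      Matrix.of fun i j => pderiv i.succ (pderiv j.succ F)
    H.det = -48 * (t ^ 3 - 1) * (a ^ 3 + b ^ 3 + c ^ 3 - 3 * a * b * c) * d := by
  intro t a b c d F H
  have hH : H = Matrix.of ![![2*(t*b-c), 2*(t*a-b), 2*(t*c-a), 0],
      ![2*(t*a-b), 2*(t*c-a), 2*(t*b-c), 0],
      ![2*(t*c-a), 2*(t*b-c), 2*(t*a-b), 0],
      ![0, 0, 0, 6*d]] := by
    apply Matrix.ext
    intro i j
    fin_cases i <;> fin_cases j <;>
      · simp only [H, F, t, a, b, c, d, Matrix.of_apply, map_sub, map_add,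
          Derivation.leibniz, Derivation.leibniz_pow, pderiv_X, Pi.single_apply,
          smul_eq_mul, pderiv_two_aux, pderiv_three_aux, pderiv_one_aux,
          pderiv_natCast_aux]
        norm_num
        simp (config := { decide := true }) only [reduceIte, map_zero, mul_zero,
          zero_mul, add_zero, zero_add, if_true, if_false, pderiv_two_aux,
          pderiv_three_aux, pderiv_one_aux, pderiv_natCast_aux, Derivation.leibniz,
          Derivation.leibniz_pow, pderiv_X, Pi.single_apply, smul_eq_mul,
          neg_zero, sub_zero, zero_sub, map_sub, map_add]
        try ring
  rw [hH, det4_aux]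
  ring
end

section
/- Substituting a = 12s − 3w², b = us + 2w³, x = 6vs − 3w³, y = 2sT − w², z = w, t = 1 into F₁⁺ yields 12s²(g₀ + 4s g₁), where g₀ = u² + 3uv + 3v² + 9uw + 6Tvw + 3(T² − 12T + 24)w² and g₁ = T³ − 9T² + 36T − 36. -/
/-- Substituting `a = 12s - 3w²`, `b = us + 2w³`, `x = 6vs - 3w³`, `y = 2sT - w²`,
`z = w`, `t = 1` into `F₁⁺` yields `12s²(g₀ + 4s g₁)`. -/
theorem stmt18 {R : Type*} [CommRing R] (u v w s T : R) :
    let a := 12 * s - 3 * w ^ 2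
    let b := u * s + 2 * w ^ 3
    let x := 6 * v * s - 3 * w ^ 3
    let y := 2 * s * T - w ^ 2
    let z := w
    let t : R := 1
    x ^ 2 * t + 6 * x * y * z + 6 * b * x * t ^ 2 + 6 * y ^ 3 - 9 * a * y ^ 2 * t +
        6 * a ^ 2 * y * t ^ 2 - 3 * b * z ^ 3 + 3 * a ^ 2 * z ^ 2 * t +
        9 * a * b * z * t ^ 2 - (a ^ 3 - 12 * b ^ 2) * t ^ 3
      = 12 * s ^ 2 *
        ((u ^ 2 + 3 * u * v + 3 * v ^ 2 + 9 * u * w + 6 * T * v * w +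
            3 * (T ^ 2 - 12 * T + 24) * w ^ 2) +
          4 * s * (T ^ 3 - 9 * T ^ 2 + 36 * T - 36)) := by
  intros; ring
end

section
/- Substituting a = 12s − 3w², b = us + 2w³, x = 6vs − 3w³, y = 2sT − w², z = w, t = 1 into F₂⁺ yields 36s²(h₀ + 4s h₁), where h₀ = v²w − (T−1)uw² + 2(T−6)vw² + (T² − 24T + 48)w³ and h₁ = u + (T² − 6T + 12)v − 3(T−2)(T−6)w. -/
/-- Substituting `a = 12s - 3w²`, `b = us + 2w³`, `x = 6vs - 3w³`, `y = 2sT - w²`,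
`z = w`, `t = 1` into `F₂⁺` yields `36s²(h₀ + 4s h₁)`. -/
theorem stmt19 {R : Type*} [CommRing R] (u v w s T : R) :
    let a := 12 * s - 3 * w ^ 2
    let b := u * s + 2 * w ^ 3
    let x := 6 * v * s - 3 * w ^ 3
    let y := 2 * s * T - w ^ 2
    let z := w
    let t : R := 1
    x ^ 2 * z + 6 * x * y ^ 2 - 6 * a * x * y * t + 2 * a ^ 2 * x * t ^ 2 -
        9 * a * y ^ 2 * z - 18 * b * y * z ^ 2 + 12 * a ^ 2 * y * z * t +
        a ^ 2 * z ^ 3 + 9 * a * b * z ^ 2 * t - 3 * a ^ 3 * z * t ^ 2 +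
        a ^ 2 * b * t ^ 3
      = 36 * s ^ 2 *
        ((v ^ 2 * w - (T - 1) * u * w ^ 2 + 2 * (T - 6) * v * w ^ 2 +
            (T ^ 2 - 24 * T + 48) * w ^ 3) +
          4 * s * (u + (T ^ 2 - 6 * T + 12) * v - 3 * (T - 2) * (T - 6) * w)) := by
  intros; ring
end
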